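/- Let 1 ≤ t ≤ k < n be integers and let x_1, ..., x_n be real numbers of which exactly t are nonnegative. Suppose the sum of every subset of size greater than k is negative. Then the number of subsets of {1,...,n} with nonnegative sum (including the empty set) is at most 2^{t-1} · (C(n-t,k-t) + C(n-t,k-t-1) + ... + C(n-t,0) + 1). -/

import Mathlib

open scoped Classical

open Finset

private lemma split_card {α : Type*} [DecidableEq α] {N : Finset α} {a : α} (ha : a ∈ N)
    (p : Finset α → Prop) [DecidablePred p] :
    (N.powerset.filter p).card
      = ((N.erase a).powerset.filter p).card
        + ((N.erase a).powerset.filter (fun B => p (insert a B))).card := by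
  have hdisj : Disjoint ((N.erase a).powerset.filter p)
      ((((N.erase a).powerset.image (insert a))).filter p) := by
    rw [Finset.disjoint_left]
    intro B hB hB'
    have h1 : a ∉ B := fun hm =>
      Finset.notMem_erase a N (Finset.mem_powerset.1 (Finset.mem_filter.1 hB).1 hm)
    obtain ⟨B₀, _, rfl⟩ := Finset.mem_image.1 (Finset.mem_filter.1 hB').1
    exact h1 (Finset.mem_insert_self a B₀)
  conv_lhs => rw [← Finset.insert_erase ha]
  rw [Finset.powerset_insert, Finset.filter_union, Finset.card_union_of_disjoint hdisj,
    Finset.filter_image, Finset.card_image_of_injOn]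
  intro B hB C hC hBC
  simp only [Finset.coe_filter, Set.mem_setOf_eq] at hB hC
  have haB : a ∉ B := fun hm => Finset.notMem_erase a N (Finset.mem_powerset.1 hB.1 hm)
  have haC : a ∉ C := fun hm => Finset.notMem_erase a N (Finset.mem_powerset.1 hC.1 hm)
  rw [← Finset.erase_insert haB, ← Finset.erase_insert haC, hBC]

private lemma lemD {α : Type*} [DecidableEq α] (w : α → ℝ) (N : Finset α) :
    ∀ (s : ℕ) (θ δ : ℝ), (∀ i ∈ N, 0 ≤ w i) → s ≤ N.card →
      (∀ E, E ⊆ N → E.card = s → θ ≤ ∑ i ∈ E, w i) →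
      (N.powerset.filter fun B => B.card ≤ s ∧ ∑ i ∈ B, w i ≤ δ).card ≤
        (N.powerset.filter fun B => B.card ≤ s ∧ θ - δ ≤ ∑ i ∈ B, w i).card := by
  induction N using Finset.strongInduction with
  | _ N ih =>
  intro s θ δ hw hsN hθ
  rcases eq_or_lt_of_le hsN with hsN' | hsN'
  · -- s = N.card : complement bijection
    apply Finset.card_le_card_of_injOn (fun B => N \ B)
    · intro B hB
      simp only [Finset.mem_coe, Finset.mem_filter, Finset.mem_powerset] at hB ⊢
      obtain ⟨hBN, _, hsum⟩ := hB
      have hN : θ ≤ ∑ i ∈ N, w i := hθ N Finset.Subset.rfl hsN'.symm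
      refine ⟨Finset.sdiff_subset, ?_, ?_⟩
      · rw [hsN']; exact Finset.card_le_card Finset.sdiff_subset
      · rw [Finset.sum_sdiff_eq_sub hBN]; linarith
    · intro B hB C hC hBC
      simp only [Finset.coe_filter, Set.mem_setOf_eq] at hB hC
      have hBN := Finset.mem_powerset.1 hB.1
      have hCN := Finset.mem_powerset.1 hC.1
      have e1 : N \ (N \ B) = B := by
        rw [Finset.sdiff_sdiff_self_left, Finset.inter_eq_right.2 hBN]
      have e2 : N \ (N \ C) = C := by
        rw [Finset.sdiff_sdiff_self_left, Finset.inter_eq_right.2 hCN]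
      have hBC' : N \ B = N \ C := hBC
      rw [← e1, ← e2, hBC']
  · rcases Nat.eq_zero_or_pos s with hs0 | hs1
    · -- s = 0
      subst hs0
      by_cases hδ : 0 ≤ δ
      · have hθ0 : θ ≤ 0 := by
          have := hθ ∅ (Finset.empty_subset N) Finset.card_empty
          simpa using this
        have hR : (∅ : Finset α) ∈ N.powerset.filter
            (fun B => B.card ≤ 0 ∧ θ - δ ≤ ∑ i ∈ B, w i) := by
          simp only [Finset.mem_filter, Finset.mem_powerset]
          exact ⟨Finset.empty_subset N, le_refl _, by simp; linarith⟩
        have hL : N.powerset.filter (fun B => B.card ≤ 0 ∧ ∑ i ∈ B, w i ≤ δ)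
            ⊆ {∅} := by
          intro B hB
          simp only [Finset.mem_filter] at hB
          simp [Finset.card_eq_zero.1 (Nat.le_zero.1 hB.2.1)]
        calc (N.powerset.filter (fun B => B.card ≤ 0 ∧ ∑ i ∈ B, w i ≤ δ)).card
            ≤ ({∅} : Finset (Finset α)).card := Finset.card_le_card hL
          _ = 1 := Finset.card_singleton _
          _ ≤ _ := Finset.card_pos.2 ⟨∅, hR⟩
      · have hL : N.powerset.filter (fun B => B.card ≤ 0 ∧ ∑ i ∈ B, w i ≤ δ) = ∅ := by
          apply Finset.filter_false_of_mem
          intro B hB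
          rintro ⟨h1, h2⟩
          rw [Finset.card_eq_zero.1 (Nat.le_zero.1 h1)] at h2
          simp at h2
          linarith
        rw [hL]
        exact Nat.zero_le _
    · -- 1 ≤ s < N.card
      have hNne : N.Nonempty := Finset.card_pos.1 (lt_of_le_of_lt (Nat.zero_le s) hsN')
      obtain ⟨a, ha⟩ := hNne
      have haw : 0 ≤ w a := hw a ha
      have hss : N.erase a ⊂ N := Finset.erase_ssubset ha
      have hcarde : (N.erase a).card = N.card - 1 := Finset.card_erase_of_mem ha
      rw [split_card ha (fun B => B.card ≤ s ∧ ∑ i ∈ B, w i ≤ δ),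
        split_card ha (fun B => B.card ≤ s ∧ θ - δ ≤ ∑ i ∈ B, w i)]
      apply Nat.add_le_add
      · exact ih _ hss s θ δ (fun i hi => hw i (Finset.mem_of_mem_erase hi))
          (by omega)
          (fun E hE hEc => hθ E (hE.trans (Finset.erase_subset a N)) hEc)
      · have e1 : (N.erase a).powerset.filter
            (fun B => (insert a B).card ≤ s ∧ ∑ i ∈ insert a B, w i ≤ δ)
            = (N.erase a).powerset.filter
              (fun B => B.card ≤ s - 1 ∧ ∑ i ∈ B, w i ≤ δ - w a) := by
          apply Finset.filter_congr
          intro B hB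
          have haB : a ∉ B := fun hm =>
            Finset.notMem_erase a N (Finset.mem_powerset.1 hB hm)
          rw [Finset.card_insert_of_notMem haB, Finset.sum_insert haB]
          constructor
          · rintro ⟨h1, h2⟩; exact ⟨by omega, by linarith⟩
          · rintro ⟨h1, h2⟩; exact ⟨by omega, by linarith⟩
        have e2 : (N.erase a).powerset.filter
            (fun B => (insert a B).card ≤ s ∧ θ - δ ≤ ∑ i ∈ insert a B, w i)
            = (N.erase a).powerset.filter
              (fun B => B.card ≤ s - 1 ∧ (θ - 2 * w a) - (δ - w a) ≤ ∑ i ∈ B, w i) := by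
          apply Finset.filter_congr
          intro B hB
          have haB : a ∉ B := fun hm =>
            Finset.notMem_erase a N (Finset.mem_powerset.1 hB hm)
          rw [Finset.card_insert_of_notMem haB, Finset.sum_insert haB]
          constructor
          · rintro ⟨h1, h2⟩; exact ⟨by omega, by linarith⟩
          · rintro ⟨h1, h2⟩; exact ⟨by omega, by linarith⟩
        rw [e1, e2]
        apply ih _ hss (s - 1) (θ - 2 * w a) (δ - w a)
          (fun i hi => hw i (Finset.mem_of_mem_erase hi)) (by omega)
        intro E hE hEc
        have haE : a ∉ E := fun hm => Finset.notMem_erase a N (hE hm)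
        have hins : (insert a E).card = s := by
          rw [Finset.card_insert_of_notMem haE, hEc]; omega
        have hsub : insert a E ⊆ N :=
          Finset.insert_subset ha (hE.trans (Finset.erase_subset a N))
        have := hθ (insert a E) hsub hins
        rw [Finset.sum_insert haE] at this
        linarith

private lemma lemC {α : Type*} [DecidableEq α] (w : α → ℝ) (N : Finset α) :
    ∀ (r : ℕ) (θ δ : ℝ), (∀ i ∈ N, 0 ≤ w i) → 1 ≤ r → r + 1 ≤ N.card →
      (∀ E, E ⊆ N → E.card = r + 1 → θ ≤ ∑ i ∈ E, w i) →
      (N.powerset.filter fun B => (B.Nonempty ∧ B.card ≤ r) ∧ ∑ i ∈ B, w i ≤ δ).card ≤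
        (N.powerset.filter fun B => (B.Nonempty ∧ B.card ≤ r) ∧ θ - δ ≤ ∑ i ∈ B, w i).card := by
  induction N using Finset.strongInduction with
  | _ N ih =>
  intro r θ δ hw hr1 hrN hθ
  rcases eq_or_lt_of_le hrN with hrN' | hrN'
  · -- r + 1 = N.card : complement bijection
    apply Finset.card_le_card_of_injOn (fun B => N \ B)
    · intro B hB
      simp only [Finset.mem_coe, Finset.mem_filter, Finset.mem_powerset] at hB ⊢
      obtain ⟨hBN, ⟨hBne, hBcard⟩, hsum⟩ := hB
      have hN : θ ≤ ∑ i ∈ N, w i := hθ N Finset.Subset.rfl hrN'.symm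
      have hcardB : 1 ≤ B.card := Finset.card_pos.2 hBne
      have hcards : (N \ B).card = N.card - B.card := Finset.card_sdiff_of_subset hBN
      refine ⟨Finset.sdiff_subset, ⟨?_, ?_⟩, ?_⟩
      · rw [← Finset.card_pos, hcards]; omega
      · rw [hcards]; omega
      · rw [Finset.sum_sdiff_eq_sub hBN]; linarith
    · intro B hB C hC hBC
      simp only [Finset.coe_filter, Set.mem_setOf_eq] at hB hC
      have hBN := Finset.mem_powerset.1 hB.1
      have hCN := Finset.mem_powerset.1 hC.1
      have e1 : N \ (N \ B) = B := by
        rw [Finset.sdiff_sdiff_self_left, Finset.inter_eq_right.2 hBN]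
      have e2 : N \ (N \ C) = C := by
        rw [Finset.sdiff_sdiff_self_left, Finset.inter_eq_right.2 hCN]
      have hBC' : N \ B = N \ C := hBC
      rw [← e1, ← e2, hBC']
  · -- r + 1 < N.card : pick max element
    have hNne : N.Nonempty := Finset.card_pos.1 (by omega)
    obtain ⟨a, ha, hmax⟩ := Finset.exists_max_image N w hNne
    have haw : 0 ≤ w a := hw a ha
    have hss : N.erase a ⊂ N := Finset.erase_ssubset ha
    have hcarde : (N.erase a).card = N.card - 1 := Finset.card_erase_of_mem ha
    rw [split_card ha (fun B => (B.Nonempty ∧ B.card ≤ r) ∧ ∑ i ∈ B, w i ≤ δ),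
      split_card ha (fun B => (B.Nonempty ∧ B.card ≤ r) ∧ θ - δ ≤ ∑ i ∈ B, w i)]
    apply Nat.add_le_add
    · exact ih _ hss r θ δ (fun i hi => hw i (Finset.mem_of_mem_erase hi)) hr1
        (by omega)
        (fun E hE hEc => hθ E (hE.trans (Finset.erase_subset a N)) hEc)
    · have e1 : (N.erase a).powerset.filter
          (fun B => ((insert a B).Nonempty ∧ (insert a B).card ≤ r) ∧
            ∑ i ∈ insert a B, w i ≤ δ)
          = (N.erase a).powerset.filter
            (fun B => B.card ≤ r - 1 ∧ ∑ i ∈ B, w i ≤ δ - w a) := by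
        apply Finset.filter_congr
        intro B hB
        have haB : a ∉ B := fun hm =>
          Finset.notMem_erase a N (Finset.mem_powerset.1 hB hm)
        rw [Finset.card_insert_of_notMem haB, Finset.sum_insert haB]
        constructor
        · rintro ⟨⟨_, h1⟩, h2⟩; exact ⟨by omega, by linarith⟩
        · rintro ⟨h1, h2⟩
          exact ⟨⟨Finset.insert_nonempty a B, by omega⟩, by linarith⟩
      have e2 : (N.erase a).powerset.filter
          (fun B => ((insert a B).Nonempty ∧ (insert a B).card ≤ r) ∧
            θ - δ ≤ ∑ i ∈ insert a B, w i)
          = (N.erase a).powerset.filter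
            (fun B => B.card ≤ r - 1 ∧ (θ - 2 * w a) - (δ - w a) ≤ ∑ i ∈ B, w i) := by
        apply Finset.filter_congr
        intro B hB
        have haB : a ∉ B := fun hm =>
          Finset.notMem_erase a N (Finset.mem_powerset.1 hB hm)
        rw [Finset.card_insert_of_notMem haB, Finset.sum_insert haB]
        constructor
        · rintro ⟨⟨_, h1⟩, h2⟩; exact ⟨by omega, by linarith⟩
        · rintro ⟨h1, h2⟩
          exact ⟨⟨Finset.insert_nonempty a B, by omega⟩, by linarith⟩
      rw [e1, e2]
      apply lemD w (N.erase a) (r - 1) (θ - 2 * w a) (δ - w a)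
        (fun i hi => hw i (Finset.mem_of_mem_erase hi)) (by omega)
      intro E hE hEc
      -- find b ∈ (N.erase a) \ E
      have hbne : ((N.erase a) \ E).Nonempty := by
        rw [← Finset.card_pos, Finset.card_sdiff_of_subset hE, hcarde, hEc]; omega
      obtain ⟨b, hb⟩ := hbne
      have hbNa : b ∈ N.erase a := (Finset.mem_sdiff.1 hb).1
      have hbE : b ∉ E := (Finset.mem_sdiff.1 hb).2
      have hba : b ≠ a := Finset.ne_of_mem_erase hbNa
      have hbN : b ∈ N := Finset.mem_of_mem_erase hbNa
      have haE : a ∉ E := fun hm => Finset.notMem_erase a N (hE hm)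
      have habE : a ∉ insert b E := by
        simp only [Finset.mem_insert]
        rintro (rfl | hm)
        · exact hba rfl
        · exact haE hm
      have hcard : (insert a (insert b E)).card = r + 1 := by
        rw [Finset.card_insert_of_notMem habE, Finset.card_insert_of_notMem hbE, hEc]
        omega
      have hsub : insert a (insert b E) ⊆ N :=
        Finset.insert_subset ha
          (Finset.insert_subset hbN (hE.trans (Finset.erase_subset a N)))
      have hθ' := hθ _ hsub hcard
      rw [Finset.sum_insert habE, Finset.sum_insert hbE] at hθ'
      have hwb : w b ≤ w a := hmax b hbN
      linarith

theorem stmt_1 (n k t : ℕ) (ht : 1 ≤ t) (htk : t ≤ k) (hkn : k < n) (x : Fin n → ℝ)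
    (hcount : (Finset.univ.filter (fun i : Fin n => 0 ≤ x i)).card = t)
    (h : ∀ S : Finset (Fin n), k < S.card → ∑ i ∈ S, x i < 0) :
    (Finset.univ.filter (fun S : Finset (Fin n) => 0 ≤ ∑ i ∈ S, x i)).card ≤
      2 ^ (t - 1) * ((∑ i ∈ Finset.range (k - t + 1), (n - t).choose i) + 1) := by
  obtain ⟨t', rfl⟩ : ∃ t', t = t' + 1 := ⟨t - 1, by omega⟩
  simp only [Nat.add_sub_cancel]
  set P : Finset (Fin n) := Finset.univ.filter (fun i => 0 ≤ x i) with hPdef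
  set Nn : Finset (Fin n) := Finset.univ \ P with hNdef
  set r : ℕ := k - (t' + 1) with hrdef
  have hPcard : P.card = t' + 1 := hcount
  have hNncard : Nn.card = n - (t' + 1) := by
    rw [hNdef, Finset.card_sdiff_of_subset (Finset.subset_univ P), Finset.card_univ, Fintype.card_fin,
      hPcard]
  have hxP : ∀ i ∈ P, 0 ≤ x i := fun i hi => (Finset.mem_filter.1 hi).2
  have hxNn : ∀ i ∈ Nn, x i < 0 := by
    intro i hi
    have h2 := (Finset.mem_sdiff.1 hi).2
    rw [hPdef] at h2
    simp only [Finset.mem_filter, Finset.mem_univ, true_and] at h2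
    linarith [lt_of_not_ge h2]
  set w : Fin n → ℝ := fun i => - x i with hwdef
  have hwpos : ∀ i ∈ Nn, 0 ≤ w i := by
    intro i hi
    have := hxNn i hi
    simp only [hwdef]
    linarith
  have hsw : ∀ B : Finset (Fin n), ∑ i ∈ B, w i = - ∑ i ∈ B, x i := by
    intro B
    simp [hwdef]
  have hdisjPN : Disjoint P Nn := Finset.disjoint_sdiff
  have hPNn : ∀ S : Finset (Fin n), S ∩ P ∪ S ∩ Nn = S := by
    intro S
    rw [← Finset.inter_union_distrib_left, hNdef,
      Finset.union_sdiff_of_subset (Finset.subset_univ P), Finset.inter_univ]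
  have hdisjS : ∀ S : Finset (Fin n), Disjoint (S ∩ P) (S ∩ Nn) :=
    fun S => hdisjPN.mono Finset.inter_subset_right Finset.inter_subset_right
  have hkey : ∀ S : Finset (Fin n), 0 ≤ ∑ i ∈ S, x i → (S ∩ Nn).card ≤ r := by
    intro S hS
    by_contra hc
    push_neg at hc
    have hd : Disjoint P (S ∩ Nn) := hdisjPN.mono_right Finset.inter_subset_right
    have hcard : k < (P ∪ (S ∩ Nn)).card := by
      rw [Finset.card_union_of_disjoint hd, hPcard]
      omega
    have hneg := h _ hcard
    rw [Finset.sum_union hd] at hneg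
    have h1 : ∑ i ∈ S ∩ P, x i ≤ ∑ i ∈ P, x i :=
      Finset.sum_le_sum_of_subset_of_nonneg Finset.inter_subset_right (fun i hi _ => hxP i hi)
    have h2 : ∑ i ∈ S, x i = ∑ i ∈ S ∩ P, x i + ∑ i ∈ S ∩ Nn, x i := by
      rw [← Finset.sum_union (hdisjS S), hPNn S]
    linarith
  set 𝔅 : Finset (Finset (Fin n)) := Nn.powerset.filter (fun B => B.card ≤ r) with hBdef
  set 𝔅₁ : Finset (Finset (Fin n)) :=
    Nn.powerset.filter (fun B => B.Nonempty ∧ B.card ≤ r) with hB1def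
  have hemB1 : (∅ : Finset (Fin n)) ∉ 𝔅₁ := by simp [hB1def]
  have hBsplit : 𝔅 = insert ∅ 𝔅₁ := by
    ext B
    simp only [hBdef, hB1def, Finset.mem_insert, Finset.mem_filter, Finset.mem_powerset]
    constructor
    · rintro ⟨h1, h2⟩
      rcases Finset.eq_empty_or_nonempty B with rfl | hne
      · exact Or.inl rfl
      · exact Or.inr ⟨h1, hne, h2⟩
    · rintro (rfl | ⟨h1, h2, h3⟩)
      · exact ⟨Finset.empty_subset _, by simp⟩
      · exact ⟨h1, h3⟩
  have hBcard : 𝔅.card = 𝔅₁.card + 1 := by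
    rw [hBsplit, Finset.card_insert_of_notMem hemB1]
  have hMcard : 𝔅.card = ∑ i ∈ Finset.range (r + 1), (n - (t' + 1)).choose i := by
    have e : 𝔅 = (Finset.range (r + 1)).biUnion (fun i => Nn.powersetCard i) := by
      ext B
      simp only [hBdef, Finset.mem_filter, Finset.mem_powerset, Finset.mem_biUnion,
        Finset.mem_range, Finset.mem_powersetCard, Nat.lt_succ_iff]
      constructor
      · rintro ⟨h1, h2⟩
        exact ⟨B.card, h2, h1, rfl⟩
      · rintro ⟨i, hi, h1, rfl⟩
        exact ⟨h1, hi⟩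
    rw [e, Finset.card_biUnion]
    · exact Finset.sum_congr rfl (fun i _ => by rw [Finset.card_powersetCard, hNncard])
    · intro i _ j _ hij
      rw [Function.onFun, Finset.disjoint_left]
      intro B h1 h2
      rw [Finset.mem_powersetCard] at h1 h2
      exact hij (by omega)
  set PP : Finset (Finset (Fin n) × Finset (Fin n)) :=
    (P.powerset ×ˢ 𝔅).filter (fun z => 0 ≤ ∑ i ∈ z.1, x i + ∑ i ∈ z.2, x i) with hPPdef
  have hinj : (Finset.univ.filter (fun S : Finset (Fin n) => 0 ≤ ∑ i ∈ S, x i)).card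
      ≤ PP.card := by
    apply Finset.card_le_card_of_injOn (fun S => (S ∩ P, S ∩ Nn))
    · intro S hS
      have hS' := (Finset.mem_filter.1 hS).2
      have hsum : ∑ i ∈ S ∩ P, x i + ∑ i ∈ S ∩ Nn, x i = ∑ i ∈ S, x i := by
        rw [← Finset.sum_union (hdisjS S), hPNn S]
      simp only [Finset.mem_coe, hPPdef, hBdef, Finset.mem_filter, Finset.mem_product, Finset.mem_powerset]
      refine ⟨⟨Finset.inter_subset_right, Finset.inter_subset_right, hkey S hS'⟩, ?_⟩
      rw [hsum]
      exact hS'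
    · intro S hS T hT hST
      have h1 : S ∩ P = T ∩ P := congrArg Prod.fst hST
      have h2 : S ∩ Nn = T ∩ Nn := congrArg Prod.snd hST
      rw [← hPNn S, ← hPNn T, h1, h2]
  have hfiber : PP.card = ∑ B ∈ 𝔅,
      (P.powerset.filter (fun A => 0 ≤ ∑ i ∈ A, x i + ∑ i ∈ B, x i)).card := by
    rw [Finset.card_eq_sum_card_fiberwise
      (f := fun z : Finset (Fin n) × Finset (Fin n) => z.2) (t := 𝔅)
      (fun z hz => (Finset.mem_product.1 (Finset.mem_filter.1 hz).1).2)]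
    apply Finset.sum_congr rfl
    intro B hB
    apply Finset.card_bij (fun z _ => z.1)
    · intro z hz
      simp only [Finset.mem_filter, hPPdef, Finset.mem_product] at hz
      obtain ⟨⟨⟨hz1, _⟩, hz3⟩, hz4⟩ := hz
      rw [hz4] at hz3
      exact Finset.mem_filter.2 ⟨hz1, hz3⟩
    · intro z1 h1 z2 h2 he
      have e1 : z1.2 = B := (Finset.mem_filter.1 h1).2
      have e2 : z2.2 = B := (Finset.mem_filter.1 h2).2
      exact Prod.ext he (e1.trans e2.symm)
    · intro A hA
      have hA' := Finset.mem_filter.1 hA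
      refine ⟨(A, B), ?_, rfl⟩
      simp only [Finset.mem_filter, hPPdef, Finset.mem_product]
      exact ⟨⟨⟨hA'.1, hB⟩, hA'.2⟩, by simp⟩
  have hgemp : (P.powerset.filter
      (fun A => 0 ≤ ∑ i ∈ A, x i + ∑ i ∈ (∅ : Finset (Fin n)), x i)).card
      = 2 ^ (t' + 1) := by
    rw [Finset.filter_true_of_mem, Finset.card_powerset, hPcard]
    intro A hA
    rw [Finset.sum_empty, add_zero]
    exact Finset.sum_nonneg (fun i hi => hxP i (Finset.mem_powerset.1 hA hi))
  have hmain : ∑ B ∈ 𝔅₁,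
      (P.powerset.filter (fun A => 0 ≤ ∑ i ∈ A, x i + ∑ i ∈ B, x i)).card
      ≤ 2 ^ t' * 𝔅₁.card := by
    rcases Nat.eq_zero_or_pos r with hr0 | hr1
    · have hB1e : 𝔅₁ = ∅ := by
        rw [hB1def]
        apply Finset.filter_false_of_mem
        rintro B hB ⟨hne, hcard⟩
        rw [hr0] at hcard
        have := Finset.card_pos.2 hne
        omega
      simp [hB1e]
    · have hq1 : r + 1 ≤ Nn.card := by rw [hNncard]; omega
      have hne : (Nn.powersetCard (r + 1)).Nonempty := by
        rw [← Finset.card_pos, Finset.card_powersetCard]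
        exact Nat.choose_pos hq1
      obtain ⟨E₀, hE₀, hE₀min⟩ :=
        Finset.exists_min_image (Nn.powersetCard (r + 1)) (fun E => ∑ i ∈ E, w i) hne
      set θ : ℝ := ∑ i ∈ E₀, w i with hθdef
      have hE₀Nn : E₀ ⊆ Nn := (Finset.mem_powersetCard.1 hE₀).1
      have hE₀card : E₀.card = r + 1 := (Finset.mem_powersetCard.1 hE₀).2
      have hθle : ∀ E, E ⊆ Nn → E.card = r + 1 → θ ≤ ∑ i ∈ E, w i := by
        intro E hE hEc
        exact hE₀min E (Finset.mem_powersetCard.2 ⟨hE, hEc⟩)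
      have hθgt : ∑ i ∈ P, x i < θ := by
        have hd : Disjoint P E₀ := hdisjPN.mono_right hE₀Nn
        have hcard : k < (P ∪ E₀).card := by
          rw [Finset.card_union_of_disjoint hd, hPcard, hE₀card]
          omega
        have hh := h _ hcard
        rw [Finset.sum_union hd] at hh
        have := hsw E₀
        rw [hθdef, this]
        linarith
      have hgconv : ∀ B : Finset (Fin n),
          (P.powerset.filter (fun A => 0 ≤ ∑ i ∈ A, x i + ∑ i ∈ B, x i)).card
          = (P.powerset.filter (fun A => ∑ i ∈ B, w i ≤ ∑ i ∈ A, x i)).card := by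
        intro B
        congr 1
        apply Finset.filter_congr
        intro A _
        rw [hsw B]
        constructor <;> intro hh <;> linarith
      have hcompl : ∀ A ∈ P.powerset,
          (𝔅₁.filter (fun B => ∑ i ∈ B, w i ≤ ∑ i ∈ A, x i)).card
            + (𝔅₁.filter (fun B => ∑ i ∈ B, w i ≤ ∑ i ∈ P \ A, x i)).card
          ≤ 𝔅₁.card := by
        intro A hA
        have hAsub := Finset.mem_powerset.1 hA
        have hsplitsum : ∑ i ∈ A, x i + ∑ i ∈ P \ A, x i = ∑ i ∈ P, x i := by
          rw [Finset.sum_sdiff_eq_sub hAsub]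
          ring
        have eL : 𝔅₁.filter (fun B => ∑ i ∈ B, w i ≤ ∑ i ∈ A, x i)
            = Nn.powerset.filter
              (fun B => (B.Nonempty ∧ B.card ≤ r) ∧ ∑ i ∈ B, w i ≤ ∑ i ∈ A, x i) := by
          ext B
          simp only [hB1def, Finset.mem_filter]
          tauto
        have eR : 𝔅₁.filter (fun B => ¬ (∑ i ∈ B, w i ≤ ∑ i ∈ P \ A, x i))
            = Nn.powerset.filter
              (fun B => (B.Nonempty ∧ B.card ≤ r) ∧ ¬ (∑ i ∈ B, w i ≤ ∑ i ∈ P \ A, x i)) := by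
          ext B
          simp only [hB1def, Finset.mem_filter]
          tauto
        have hCineq := lemC w Nn r θ (∑ i ∈ A, x i) hwpos hr1 hq1 hθle
        have hsub2 : Nn.powerset.filter
              (fun B => (B.Nonempty ∧ B.card ≤ r) ∧ θ - ∑ i ∈ A, x i ≤ ∑ i ∈ B, w i)
            ⊆ Nn.powerset.filter
              (fun B => (B.Nonempty ∧ B.card ≤ r) ∧ ¬ (∑ i ∈ B, w i ≤ ∑ i ∈ P \ A, x i)) := by
          apply Finset.monotone_filter_right
          rintro B _ ⟨hB1, hB2⟩
          refine ⟨hB1, ?_⟩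
          rw [not_le]
          linarith
        have hnc := Finset.card_filter_add_card_filter_not (s := 𝔅₁)
          (p := fun B => ∑ i ∈ B, w i ≤ ∑ i ∈ P \ A, x i)
        have hL : (𝔅₁.filter (fun B => ∑ i ∈ B, w i ≤ ∑ i ∈ A, x i)).card
            ≤ (𝔅₁.filter (fun B => ¬ (∑ i ∈ B, w i ≤ ∑ i ∈ P \ A, x i))).card := by
          rw [eL, eR]
          exact le_trans hCineq (Finset.card_le_card hsub2)
        omega
      have hswap : ∑ B ∈ 𝔅₁,
          (P.powerset.filter (fun A => ∑ i ∈ B, w i ≤ ∑ i ∈ A, x i)).card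
          = ∑ A ∈ P.powerset,
            (𝔅₁.filter (fun B => ∑ i ∈ B, w i ≤ ∑ i ∈ A, x i)).card := by
        simp only [Finset.card_filter]
        exact Finset.sum_comm
      have hrefl : ∑ A ∈ P.powerset,
          (𝔅₁.filter (fun B => ∑ i ∈ B, w i ≤ ∑ i ∈ A, x i)).card
          = ∑ A ∈ P.powerset,
            (𝔅₁.filter (fun B => ∑ i ∈ B, w i ≤ ∑ i ∈ P \ A, x i)).card := by
        apply Finset.sum_nbij' (i := fun A => P \ A) (j := fun A => P \ A)
        · intro A hA
          exact Finset.mem_powerset.2 Finset.sdiff_subset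
        · intro A hA
          exact Finset.mem_powerset.2 Finset.sdiff_subset
        · intro A hA
          rw [Finset.sdiff_sdiff_self_left,
            Finset.inter_eq_right.2 (Finset.mem_powerset.1 hA)]
        · intro A hA
          rw [Finset.sdiff_sdiff_self_left,
            Finset.inter_eq_right.2 (Finset.mem_powerset.1 hA)]
        · intro A hA
          have e : P \ (P \ A) = A := by
            rw [Finset.sdiff_sdiff_self_left,
              Finset.inter_eq_right.2 (Finset.mem_powerset.1 hA)]
          rw [e]
      have hdouble : 2 * (∑ B ∈ 𝔅₁,
          (P.powerset.filter (fun A => ∑ i ∈ B, w i ≤ ∑ i ∈ A, x i)).card)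
          ≤ 2 * (2 ^ t' * 𝔅₁.card) := by
        have e1 : 2 * (∑ B ∈ 𝔅₁,
            (P.powerset.filter (fun A => ∑ i ∈ B, w i ≤ ∑ i ∈ A, x i)).card)
            = ∑ A ∈ P.powerset,
              ((𝔅₁.filter (fun B => ∑ i ∈ B, w i ≤ ∑ i ∈ A, x i)).card
                + (𝔅₁.filter (fun B => ∑ i ∈ B, w i ≤ ∑ i ∈ P \ A, x i)).card) := by
          rw [two_mul, hswap, Finset.sum_add_distrib, hrefl]
        rw [e1]
        calc ∑ A ∈ P.powerset,
            ((𝔅₁.filter (fun B => ∑ i ∈ B, w i ≤ ∑ i ∈ A, x i)).card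
              + (𝔅₁.filter (fun B => ∑ i ∈ B, w i ≤ ∑ i ∈ P \ A, x i)).card)
            ≤ ∑ _A ∈ P.powerset, 𝔅₁.card := Finset.sum_le_sum hcompl
          _ = 2 ^ (t' + 1) * 𝔅₁.card := by
              rw [Finset.sum_const, Finset.card_powerset, hPcard, smul_eq_mul]
          _ = 2 * (2 ^ t' * 𝔅₁.card) := by ring
      have hfin := Nat.le_of_mul_le_mul_left hdouble (by norm_num)
      calc ∑ B ∈ 𝔅₁,
          (P.powerset.filter (fun A => 0 ≤ ∑ i ∈ A, x i + ∑ i ∈ B, x i)).card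
          = ∑ B ∈ 𝔅₁,
            (P.powerset.filter (fun A => ∑ i ∈ B, w i ≤ ∑ i ∈ A, x i)).card :=
            Finset.sum_congr rfl (fun B _ => hgconv B)
        _ ≤ 2 ^ t' * 𝔅₁.card := hfin
  calc (Finset.univ.filter (fun S : Finset (Fin n) => 0 ≤ ∑ i ∈ S, x i)).card
      ≤ PP.card := hinj
    _ = ∑ B ∈ 𝔅,
        (P.powerset.filter (fun A => 0 ≤ ∑ i ∈ A, x i + ∑ i ∈ B, x i)).card := hfiber
    _ = (P.powerset.filter
          (fun A => 0 ≤ ∑ i ∈ A, x i + ∑ i ∈ (∅ : Finset (Fin n)), x i)).card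
        + ∑ B ∈ 𝔅₁,
          (P.powerset.filter (fun A => 0 ≤ ∑ i ∈ A, x i + ∑ i ∈ B, x i)).card := by
        rw [hBsplit, Finset.sum_insert hemB1]
    _ ≤ 2 ^ (t' + 1) + 2 ^ t' * 𝔅₁.card := by
        rw [hgemp]
        exact Nat.add_le_add_left hmain _
    _ = 2 ^ t' * ((𝔅₁.card + 1) + 1) := by ring
    _ = 2 ^ t' * (𝔅.card + 1) := by rw [hBcard]
    _ = 2 ^ t' * ((∑ i ∈ Finset.range (r + 1), (n - (t' + 1)).choose i) + 1) := by
        rw [hMcard]
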